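/- Let A be an n×n real matrix, C an m×n real matrix, Q a symmetric positive semidefinite n×n real matrix, R and Y symmetric positive definite m×m real matrices, and Σ₀ a symmetric positive definite n×n real matrix. Define g_W(X) = A X Aᵀ + Q − A X Cᵀ(C X Cᵀ + W)⁻¹ C X Aᵀ. Let γ : ℕ → {0,1} and define P₀ = Σ₀, P_{k+1} = g_{R + (1 − γ_k) Y⁻¹}(P_k). If γ_k = γ_{k+1} = ⋯ = γ_{k+l−1} = 0 for some k ≥ 0 and l ≥ 1 (l consecutive packet drops), then P_{k+l} ≥ g_{R+Y⁻¹}^l(0) in the Loewner order, where g_{R+Y⁻¹}^l denotes the l-fold iterate of g_{R+Y⁻¹} and 0 is the zero matrix. -/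

import Mathlib

open Matrix

/-- The Riccati-type map `g_W(X) = A X Aᵀ + Q − A X Cᵀ(C X Cᵀ + W)⁻¹ C X Aᵀ`. -/
noncomputable def gmap {n m : ℕ} (A : Matrix (Fin n) (Fin n) ℝ)
    (C : Matrix (Fin m) (Fin n) ℝ) (Q : Matrix (Fin n) (Fin n) ℝ)
    (W : Matrix (Fin m) (Fin m) ℝ) (X : Matrix (Fin n) (Fin n) ℝ) :
    Matrix (Fin n) (Fin n) ℝ :=
  A * X * Aᵀ + Q - A * X * Cᵀ * (C * X * Cᵀ + W)⁻¹ * C * X * Aᵀ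

/- ### Auxiliary lemmas -/

/-- Transpose of a positive semidefinite real matrix. -/
lemma psd_transpose {p : ℕ} {X : Matrix (Fin p) (Fin p) ℝ} (h : X.PosSemidef) : Xᵀ = X := by
  have := h.isHermitian
  rwa [Matrix.IsHermitian, conjTranspose_eq_transpose_of_trivial] at this

/-- `B X Bᵀ` is PSD for PSD `X` (real version). -/
lemma psdBXBt {p q : ℕ} {X : Matrix (Fin q) (Fin q) ℝ} (h : X.PosSemidef)
    (B : Matrix (Fin p) (Fin q) ℝ) : (B * X * Bᵀ).PosSemidef := by
  have := h.mul_mul_conjTranspose_same B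
  rwa [conjTranspose_eq_transpose_of_trivial] at this

/-- Algebraic expansion of a quadratic term using a two-sided inverse. -/
lemma quad_expand {p q : ℕ} (K u : Matrix (Fin p) (Fin q) ℝ) (L v : Matrix (Fin q) (Fin p) ℝ)
    (S s : Matrix (Fin q) (Fin q) ℝ) (hSs : S * s = 1) (hsS : s * S = 1) :
    (K - u * s) * S * (L - s * v) = K * S * L - K * v - u * L + u * s * v := by
  have h2 : u * s * S = u := by rw [Matrix.mul_assoc, hsS, Matrix.mul_one]
  have h1 : K * S * (s * v) = K * v := by
    rw [Matrix.mul_assoc, ← Matrix.mul_assoc S s v, hSs, Matrix.one_mul]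
  rw [Matrix.sub_mul, h2, Matrix.sub_mul, Matrix.mul_sub, Matrix.mul_sub, h1,
    ← Matrix.mul_assoc u s v]
  abel

/-- Decomposition of the quadratic form `(A-KC) X (A-KC)ᵀ + K W Kᵀ + Q` as
`g_W(X)` plus a PSD remainder. -/
lemma f_decomp {n m : ℕ} (A : Matrix (Fin n) (Fin n) ℝ) (C : Matrix (Fin m) (Fin n) ℝ)
    (Q : Matrix (Fin n) (Fin n) ℝ) (W : Matrix (Fin m) (Fin m) ℝ)
    (X : Matrix (Fin n) (Fin n) ℝ) (K : Matrix (Fin n) (Fin m) ℝ)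
    (hX : X.PosSemidef) (hW : W.PosDef) :
    (A - K * C) * X * (A - K * C)ᵀ + K * W * Kᵀ + Q
      = gmap A C Q W X
        + (K - A * X * Cᵀ * (C * X * Cᵀ + W)⁻¹) * (C * X * Cᵀ + W)
          * (K - A * X * Cᵀ * (C * X * Cᵀ + W)⁻¹)ᵀ := by
  have hXt : Xᵀ = X := psd_transpose hX
  have hS : (C * X * Cᵀ + W).PosDef := Matrix.PosDef.posSemidef_add (psdBXBt hX C) hW
  have hSt : (C * X * Cᵀ + W)ᵀ = C * X * Cᵀ + W := psd_transpose hS.posSemidef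
  have hdet : IsUnit (C * X * Cᵀ + W).det := (isUnit_iff_isUnit_det _).mp hS.isUnit
  have hSs : (C * X * Cᵀ + W) * (C * X * Cᵀ + W)⁻¹ = 1 := mul_nonsing_inv _ hdet
  have hsS : (C * X * Cᵀ + W)⁻¹ * (C * X * Cᵀ + W) = 1 := nonsing_inv_mul _ hdet
  have hst : ((C * X * Cᵀ + W)⁻¹)ᵀ = (C * X * Cᵀ + W)⁻¹ := by
    rw [transpose_nonsing_inv, hSt]
  have huT : (A * X * Cᵀ)ᵀ = C * (X * Aᵀ) := by
    rw [transpose_mul, transpose_mul, transpose_transpose, hXt]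
  have hKt : (K - A * X * Cᵀ * (C * X * Cᵀ + W)⁻¹)ᵀ
      = Kᵀ - (C * X * Cᵀ + W)⁻¹ * (C * (X * Aᵀ)) := by
    rw [transpose_sub, transpose_mul, hst, huT]
  rw [hKt, quad_expand K (A * X * Cᵀ) Kᵀ (C * (X * Aᵀ)) _ _ hSs hsS]
  simp only [gmap]
  have hAK : (A - K * C)ᵀ = Aᵀ - Cᵀ * Kᵀ := by rw [transpose_sub, transpose_mul]
  rw [hAK]
  simp only [Matrix.sub_mul, Matrix.mul_sub, Matrix.add_mul, Matrix.mul_add, Matrix.mul_assoc]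
  abel

/-- `g_W` maps PSD matrices to PSD matrices. -/
lemma gmap_psd {n m : ℕ} (A : Matrix (Fin n) (Fin n) ℝ) (C : Matrix (Fin m) (Fin n) ℝ)
    {Q : Matrix (Fin n) (Fin n) ℝ} {W : Matrix (Fin m) (Fin m) ℝ}
    {X : Matrix (Fin n) (Fin n) ℝ}
    (hQ : Q.PosSemidef) (hW : W.PosDef) (hX : X.PosSemidef) :
    (gmap A C Q W X).PosSemidef := by
  set K := A * X * Cᵀ * (C * X * Cᵀ + W)⁻¹ with hK
  have h := f_decomp A C Q W X K hX hW
  simp only [← hK, sub_self, Matrix.zero_mul, transpose_zero, Matrix.mul_zero, add_zero] at h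
  rw [← h]
  exact ((psdBXBt hX (A - K * C)).add (psdBXBt hW.posSemidef K)).add hQ

/-- `g_W` is monotone w.r.t. the Loewner order on PSD matrices. -/
lemma gmap_mono {n m : ℕ} (A : Matrix (Fin n) (Fin n) ℝ) (C : Matrix (Fin m) (Fin n) ℝ)
    {Q : Matrix (Fin n) (Fin n) ℝ} {W : Matrix (Fin m) (Fin m) ℝ}
    {X Z : Matrix (Fin n) (Fin n) ℝ}
    (hX : X.PosSemidef) (hZ : Z.PosSemidef) (hZX : (Z - X).PosSemidef) (hW : W.PosDef) :
    (gmap A C Q W Z - gmap A C Q W X).PosSemidef := by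
  set K := A * Z * Cᵀ * (C * Z * Cᵀ + W)⁻¹ with hKdef
  have e1 : gmap A C Q W Z = (A - K * C) * Z * (A - K * C)ᵀ + K * W * Kᵀ + Q := by
    have h := f_decomp A C Q W Z K hZ hW
    simp only [← hKdef, sub_self, Matrix.zero_mul, transpose_zero, Matrix.mul_zero, add_zero] at h
    exact h.symm
  have e2 := f_decomp A C Q W X K hX hW
  have e2' : gmap A C Q W X
      = (A - K * C) * X * (A - K * C)ᵀ + K * W * Kᵀ + Q
        - (K - A * X * Cᵀ * (C * X * Cᵀ + W)⁻¹) * (C * X * Cᵀ + W)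
          * (K - A * X * Cᵀ * (C * X * Cᵀ + W)⁻¹)ᵀ :=
    eq_sub_of_add_eq e2.symm
  have hSX : (C * X * Cᵀ + W).PosDef := Matrix.PosDef.posSemidef_add (psdBXBt hX C) hW
  have key : gmap A C Q W Z - gmap A C Q W X
      = (A - K * C) * (Z - X) * (A - K * C)ᵀ
        + (K - A * X * Cᵀ * (C * X * Cᵀ + W)⁻¹) * (C * X * Cᵀ + W)
          * (K - A * X * Cᵀ * (C * X * Cᵀ + W)⁻¹)ᵀ := by
    have expand : (A - K * C) * (Z - X) * (A - K * C)ᵀ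
        = (A - K * C) * Z * (A - K * C)ᵀ - (A - K * C) * X * (A - K * C)ᵀ := by
      rw [Matrix.mul_sub, Matrix.sub_mul]
    rw [e1, e2', expand]
    abel
  rw [key]
  exact (psdBXBt hZX (A - K * C)).add (psdBXBt hSX.posSemidef _)

/-- Under the OLSET-KF recursion `P₀ = Σ₀`, `P_{k+1} = g_{R + (1 − γ_k)Y⁻¹}(P_k)`,
if `l ≥ 1` consecutive packets are dropped starting at time `k`
(`γ_k = ⋯ = γ_{k+l−1} = 0`), then `P_{k+l} ≥ g_{R+Y⁻¹}^l(0)` in the Loewner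
order. -/
theorem stmt_9 {n m : ℕ} (A : Matrix (Fin n) (Fin n) ℝ)
    (C : Matrix (Fin m) (Fin n) ℝ) (Q : Matrix (Fin n) (Fin n) ℝ)
    (R Y : Matrix (Fin m) (Fin m) ℝ) (Sig0 : Matrix (Fin n) (Fin n) ℝ)
    (hQ : Q.PosSemidef) (hR : R.PosDef) (hY : Y.PosDef) (hSig0 : Sig0.PosDef)
    (γ : ℕ → ℕ) (hγ : ∀ k, γ k = 0 ∨ γ k = 1)
    (P : ℕ → Matrix (Fin n) (Fin n) ℝ)
    (hP0 : P 0 = Sig0)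
    (hPrec : ∀ k, P (k + 1) =
      gmap A C Q (R + ((1 : ℝ) - (γ k : ℝ)) • Y⁻¹) (P k))
    (k l : ℕ) (hl : 1 ≤ l) (hdrop : ∀ i < l, γ (k + i) = 0) :
    (P (k + l) - (gmap A C Q (R + Y⁻¹))^[l] 0).PosSemidef := by
  have hRY : (R + Y⁻¹).PosDef := hR.add hY.inv
  have hPSDW : ∀ j, (R + ((1 : ℝ) - (γ j : ℝ)) • Y⁻¹).PosDef := by
    intro j
    rcases hγ j with h | h
    · rw [h]; simpa using hRY
    · rw [h]; simpa using hR
  have hP : ∀ j, (P j).PosSemidef := by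
    intro j
    induction j with
    | zero => rw [hP0]; exact hSig0.posSemidef
    | succ j ih => rw [hPrec]; exact gmap_psd A C hQ (hPSDW j) ih
  have hIter : ∀ i, ((gmap A C Q (R + Y⁻¹))^[i] 0).PosSemidef := by
    intro i
    induction i with
    | zero => simpa using Matrix.PosSemidef.zero
    | succ i ih =>
      rw [Function.iterate_succ_apply']
      exact gmap_psd A C hQ hRY ih
  have main : ∀ i, (∀ j < i, γ (k + j) = 0) →
      (P (k + i) - (gmap A C Q (R + Y⁻¹))^[i] 0).PosSemidef := by
    intro i
    induction i with
    | zero => intro _; simpa using hP k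
    | succ i ih =>
      intro h
      have hi := ih fun j hj => h j (hj.trans (Nat.lt_succ_self i))
      have hγ0 : γ (k + i) = 0 := h i (Nat.lt_succ_self i)
      have hk : k + (i + 1) = (k + i) + 1 := rfl
      rw [hk, hPrec (k + i), Function.iterate_succ_apply', hγ0]
      simp only [Nat.cast_zero, sub_zero, one_smul]
      exact gmap_mono A C (hIter i) (hP (k + i)) hi hRY
  exact main l hdrop
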